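/- Let P be a Markov kernel on a measurable space E, V : E → [1,∞) measurable, φ : [0,∞) → [0,∞) concave with φ(0) = 0, and suppose PV(x) ≤ V(x) − φ(V(x)) + b for all x ∈ E (with b < ∞). Let υ > φ^{-1}(2b) and set c = 1 − 2b/φ(υ) and C = {V ≤ υ}. Then for all x, y ∈ E: PV(x) + PV(y) ≤ V(x) + V(y) − c·φ(V(x) + V(y)) + 2b·1_{C×C}(x,y). -/

import Mathlib

open Set MeasureTheory ProbabilityTheory

private lemma phi_scale {φ : ℝ → ℝ} (hconc : ConcaveOn ℝ (Set.Ici (0 : ℝ)) φ)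
    (hφ0 : φ 0 = 0) {s t : ℝ} (hs : 0 ≤ s) (ht0 : 0 ≤ t) (ht1 : t ≤ 1) :
    t * φ s ≤ φ (t * s) := by
  have h := hconc.2 (Set.mem_Ici.mpr hs) (Set.mem_Ici.mpr (le_refl (0:ℝ)))
    ht0 (show (0:ℝ) ≤ 1 - t by linarith) (show t + (1 - t) = 1 by ring)
  simpa [hφ0, smul_eq_mul] using h

private lemma phi_subadd {φ : ℝ → ℝ} (hconc : ConcaveOn ℝ (Set.Ici (0 : ℝ)) φ)
    (hφ0 : φ 0 = 0) {a b : ℝ} (ha : 0 ≤ a) (hb : 0 ≤ b) :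
    φ (a + b) ≤ φ a + φ b := by
  rcases eq_or_lt_of_le (add_nonneg ha hb) with h | h
  · have ha0 : a = 0 := by linarith
    have hb0 : b = 0 := by linarith
    simp [ha0, hb0, hφ0]
  · set s := a + b with hsdef
    have h1 : (a / s) * φ s ≤ φ ((a / s) * s) :=
      phi_scale hconc hφ0 h.le (by positivity) (by rw [div_le_one h]; linarith)
    have h2 : (b / s) * φ s ≤ φ ((b / s) * s) :=
      phi_scale hconc hφ0 h.le (by positivity) (by rw [div_le_one h]; linarith)
    rw [div_mul_cancel₀ _ h.ne'] at h1 h2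
    have : (a / s) * φ s + (b / s) * φ s = φ s := by
      field_simp
      rw [hsdef]; ring
    linarith

/-- from a single drift condition `PV ≤ V − φ∘V + b`, deduce a
double drift condition on the product space with small set `C × C`,
`C = {V ≤ υ}`, and constant `c = 1 − 2b/φ(υ)`. -/
theorem double_drift_from_single_drift
    {E : Type*} [MeasurableSpace E] (P : Kernel E E) [IsMarkovKernel P]
    (V : E → ℝ) (hVmeas : Measurable V) (hV1 : ∀ x, 1 ≤ V x)
    (hVint : ∀ x, Integrable V (P x))
    (φ : ℝ → ℝ) (hconc : ConcaveOn ℝ (Set.Ici (0 : ℝ)) φ)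
    (hmono : MonotoneOn φ (Set.Ici (0 : ℝ))) (hφ0 : φ 0 = 0)
    (b : ℝ) (hb : 0 < b)
    (hdrift : ∀ x, ∫ z, V z ∂(P x) ≤ V x - φ (V x) + b)
    (υ : ℝ) (hυ : 1 ≤ υ) (hφυ : 2 * b < φ υ)
    (c : ℝ) (hc : c = 1 - 2 * b / φ υ) :
    ∀ x y : E,
      (∫ z, V z ∂(P x)) + ∫ z, V z ∂(P y)
        ≤ V x + V y - c * φ (V x + V y)
          + 2 * b * Set.indicator ({x' | V x' ≤ υ} ×ˢ {y' | V y' ≤ υ})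
              (fun _ => (1 : ℝ)) (x, y) := by
  intro x y
  have hφυpos : 0 < φ υ := by linarith
  have hVx := hV1 x
  have hVy := hV1 y
  have hS0 : (0:ℝ) ≤ V x + V y := by linarith
  have hφS0 : 0 ≤ φ (V x + V y) := by
    have := hmono (Set.mem_Ici.mpr le_rfl) (Set.mem_Ici.mpr hS0) hS0
    simpa [hφ0] using this
  have hsub : φ (V x + V y) ≤ φ (V x) + φ (V y) :=
    phi_subadd hconc hφ0 (by linarith) (by linarith)
  have hmain : (∫ z, V z ∂(P x)) + ∫ z, V z ∂(P y)
      ≤ V x + V y - φ (V x + V y) + 2 * b := by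
    have h1 := hdrift x
    have h2 := hdrift y
    linarith
  by_cases hmem : (x, y) ∈ ({x' | V x' ≤ υ} ×ˢ {y' | V y' ≤ υ} : Set (E × E))
  · rw [Set.indicator_of_mem hmem]
    have hc1 : c ≤ 1 := by
      rw [hc]; have : 0 < 2 * b / φ υ := by positivity
      linarith
    nlinarith
  · rw [Set.indicator_of_notMem hmem]
    have hone : υ ≤ V x + V y := by
      rw [Set.mem_prod] at hmem
      push_neg at hmem
      by_cases hx : V x ≤ υ
      · have : υ < V y := lt_of_not_ge (hmem hx)
        linarith
      · push_neg at hx; linarith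
    have hφmono : φ υ ≤ φ (V x + V y) :=
      hmono (Set.mem_Ici.mpr (by linarith)) (Set.mem_Ici.mpr hS0) hone
    have hkey : 2 * b ≤ (1 - c) * φ (V x + V y) := by
      rw [hc]
      have : (1 - (1 - 2 * b / φ υ)) * φ (V x + V y)
          = 2 * b * (φ (V x + V y) / φ υ) := by
        field_simp
        ring
      rw [this]
      have : 1 ≤ φ (V x + V y) / φ υ := (one_le_div hφυpos).mpr hφmono
      nlinarith
    nlinarith
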